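/- Every group of order dividing 8 that is not isomorphic to the cyclic group C₈ and not isomorphic to the quaternion group Q₈ can be embedded into the group C₂×D₈, where D₈ is the dihedral group of order 8 (equivalently, into a 2-Sylow subgroup of the symmetric group S₆). -/

import Mathlib

section Helpers

variable {G : Type*} [Group G]

private lemma pow_mod_eq' {a : G} {n : ℕ} (h : a ^ n = 1) (k : ℕ) : a ^ (k % n) = a ^ k := by
  conv_rhs => rw [← Nat.div_add_mod k n]
  rw [pow_add, pow_mul, h, one_pow, one_mul]

/-- The hom from `Multiplicative (ZMod n)` sending the generator to `a`, given `a ^ n = 1`. -/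
private def powZModHom (n : ℕ) [NeZero n] (a : G) (h : a ^ n = 1) :
    Multiplicative (ZMod n) →* G where
  toFun i := a ^ (i.toAdd).val
  map_one' := by
    show a ^ (Multiplicative.toAdd (1 : Multiplicative (ZMod n))).val = 1
    rw [toAdd_one, ZMod.val_zero, pow_zero]
  map_mul' i j := by
    simp only [toAdd_mul]
    rw [ZMod.val_add, pow_mod_eq' h, pow_add]

@[simp] private lemma powZModHom_apply (n : ℕ) [NeZero n] (a : G) (h : a ^ n = 1) (i : ZMod n) :
    powZModHom n a h (Multiplicative.ofAdd i) = a ^ i.val := rfl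

private lemma card_range_dvd' {M : Type*} [Group M] [Finite M] (f : M →* G) :
    Nat.card f.range ∣ Nat.card M := by
  classical
  rw [← Nat.card_congr (QuotientGroup.quotientKerEquivRange f).toEquiv]
  exact Subgroup.card_quotient_dvd_card _

private lemma card_between {H S : Subgroup G} [Finite G] (hHS : H ≤ S) {b : G} (hb : b ∈ S)
    (hbH : b ∉ H) (hdvd : Nat.card S ∣ 2 * Nat.card H) : Nat.card S = 2 * Nat.card H := by
  have hpos : 0 < Nat.card H := Nat.card_pos
  have hlt : Nat.card H < Nat.card S := by
    rcases lt_or_ge (Nat.card H) (Nat.card S) with h | h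
    · exact h
    · exact absurd (Subgroup.eq_of_le_of_card_ge hHS h ▸ hb) hbH
  obtain ⟨k, hk⟩ := hdvd
  have hk2 : k < 2 := by nlinarith
  interval_cases k
  · omega
  · omega

private lemma exists_pow_eq_of_mem_zpowers {a x : G} {n : ℕ} (hn : 0 < n) (h : a ^ n = 1)
    (hx : x ∈ Subgroup.zpowers a) : ∃ m, m < n ∧ x = a ^ m := by
  have hfin : IsOfFinOrder a := isOfFinOrder_iff_pow_eq_one.2 ⟨n, hn, h⟩
  obtain ⟨k, hk⟩ := (hfin.mem_powers_iff_mem_zpowers).2 hx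
  exact ⟨k % n, Nat.mod_lt _ hn, by rw [pow_mod_eq' h]; exact hk.symm⟩

private lemma surj_helper {M : Type*} [Group M] [Finite M] [Finite G]
    (f : M →* G) {a b : G} (ha : a ∈ f.range) (hb : b ∈ f.range)
    (hbH : b ∉ Subgroup.zpowers a) (hM : Nat.card M = 2 * orderOf a)
    (hG : Nat.card G = 2 * orderOf a) : Function.Surjective f := by
  rw [← MonoidHom.range_eq_top]
  have hle := Subgroup.zpowers_le.2 ha
  have hcd : Nat.card f.range ∣ 2 * Nat.card (Subgroup.zpowers a) := by
    rw [Nat.card_zpowers, ← hM]; exact card_range_dvd' f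
  have hc := card_between hle hb hbH hcd
  exact Subgroup.eq_top_of_card_eq _ (by rw [hc, Nat.card_zpowers, hG])

private noncomputable def isoOfSurjCard {M : Type*} [Group M] [Finite M] (f : M →* G)
    (hs : Function.Surjective f) (hc : Nat.card M = Nat.card G) : M ≃* G :=
  MulEquiv.ofBijective f ((Nat.bijective_iff_surjective_and_card f).2 ⟨hs, hc⟩)

end Helpers

open DihedralGroup in
private def ιD : DihedralGroup 4 →* Multiplicative (ZMod 2) × DihedralGroup 4 :=
  MonoidHom.inr _ _

private lemma ιD_inj : Function.Injective ιD := fun x y h => congrArg Prod.snd h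

private lemma case_D8 {G : Type*} [Group G] [Fintype G] (hG : Fintype.card G = 8)
    (a b : G) (ha4 : orderOf a = 4) (hb : b ∉ Subgroup.zpowers a)
    (hconj : b * a * b⁻¹ = a⁻¹) (hb2 : b ^ 2 = 1) :
    ∃ f : G →* Multiplicative (ZMod 2) × DihedralGroup 4, Function.Injective f := by
  have a4 : a ^ 4 = 1 := by rw [← ha4]; exact pow_orderOf_eq_one a
  set A := powZModHom 4 a a4 with hA
  have key : ∀ i : Multiplicative (ZMod 4), b * A i = (A i)⁻¹ * b := by
    intro i
    have h1 : b * A i * b⁻¹ = (A i)⁻¹ := by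
      show b * a ^ (i.toAdd).val * b⁻¹ = (a ^ (i.toAdd).val)⁻¹
      rw [← conj_pow, hconj, inv_pow]
    calc b * A i = b * A i * b⁻¹ * b := by group
    _ = (A i)⁻¹ * b := by rw [h1]
  have key2 : ∀ i : Multiplicative (ZMod 4), A i * b = b * (A i)⁻¹ := by
    intro i
    have h := key i⁻¹
    rw [map_inv, inv_inv] at h
    exact h.symm
  have hsplit : ∀ i j : ZMod 4, A (.ofAdd (j - i)) = (A (.ofAdd i))⁻¹ * A (.ofAdd j) := by
    intro i j
    rw [← map_inv, ← map_mul]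
    congr 1
    rw [sub_eq_neg_add]
    rfl
  let f : DihedralGroup 4 →* G :=
  { toFun := fun x => DihedralGroup.casesOn x (fun i => A (.ofAdd i)) (fun i => b * A (.ofAdd i))
    map_one' := by
      show A (.ofAdd 0) = 1
      simp
    map_mul' := by
      rintro (i | i) (j | j)
      · show A (.ofAdd (i + j)) = A (.ofAdd i) * A (.ofAdd j)
        rw [show Multiplicative.ofAdd (i + j) = .ofAdd i * .ofAdd j from rfl, map_mul]
      · show b * A (.ofAdd (j - i)) = A (.ofAdd i) * (b * A (.ofAdd j))
        rw [hsplit, ← mul_assoc, ← mul_assoc, ← key2]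
      · show b * A (.ofAdd (i + j)) = b * A (.ofAdd i) * A (.ofAdd j)
        rw [show Multiplicative.ofAdd (i + j) = .ofAdd i * .ofAdd j from rfl, map_mul, mul_assoc]
      · show A (.ofAdd (j - i)) = b * A (.ofAdd i) * (b * A (.ofAdd j))
        rw [hsplit]
        have : b * A (.ofAdd i) * (b * A (.ofAdd j))
            = b * b * ((A (.ofAdd i))⁻¹ * A (.ofAdd j)) := by
          rw [mul_assoc b (A (.ofAdd i)), ← mul_assoc (A (.ofAdd i)), key2]
          group
        rw [this, ← sq, hb2, one_mul] }
  have hfa : a ∈ f.range := ⟨.r 1, by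
    show A (.ofAdd 1) = a
    show a ^ (1 : ZMod 4).val = a
    rw [show (1 : ZMod 4).val = 1 from rfl, pow_one]⟩
  have hfb : b ∈ f.range := ⟨.sr 0, by
    show b * A (.ofAdd 0) = b
    simp⟩
  have hsurj : Function.Surjective f := by
    refine surj_helper f hfa hfb hb ?_ ?_
    · rw [ha4, Nat.card_eq_fintype_card, DihedralGroup.card]
    · rw [ha4, Nat.card_eq_fintype_card, hG]
  have e := isoOfSurjCard f hsurj (by
    rw [Nat.card_eq_fintype_card, Nat.card_eq_fintype_card, DihedralGroup.card, hG])
  exact ⟨ιD.comp e.symm.toMonoidHom, ιD_inj.comp e.symm.injective⟩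

private lemma case_Q8 {G : Type*} [Group G] [Fintype G] (hG : Fintype.card G = 8)
    (a b : G) (ha4 : orderOf a = 4) (hb : b ∉ Subgroup.zpowers a)
    (hconj : b * a * b⁻¹ = a⁻¹) (hb2 : b ^ 2 = a ^ 2) :
    Nonempty (G ≃* QuaternionGroup 2) := by
  have a4 : a ^ (2 * 2) = 1 := by
    rw [show 2 * 2 = 4 from rfl, ← ha4]; exact pow_orderOf_eq_one a
  set A := powZModHom (2 * 2) a a4 with hA
  have key : ∀ i : Multiplicative (ZMod (2 * 2)), b * A i = (A i)⁻¹ * b := by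
    intro i
    have h1 : b * A i * b⁻¹ = (A i)⁻¹ := by
      show b * a ^ (i.toAdd).val * b⁻¹ = (a ^ (i.toAdd).val)⁻¹
      rw [← conj_pow, hconj, inv_pow]
    calc b * A i = b * A i * b⁻¹ * b := by group
    _ = (A i)⁻¹ * b := by rw [h1]
  have key2 : ∀ i : Multiplicative (ZMod (2 * 2)), A i * b = b * (A i)⁻¹ := by
    intro i
    have h := key i⁻¹
    rw [map_inv, inv_inv] at h
    exact h.symm
  have hsplit : ∀ i j : ZMod (2 * 2),
      A (.ofAdd (j - i)) = (A (.ofAdd i))⁻¹ * A (.ofAdd j) := by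
    intro i j
    rw [← map_inv, ← map_mul]
    congr 1
    rw [sub_eq_neg_add]
    rfl
  have hA2 : A (.ofAdd ((2 : ℕ) : ZMod (2 * 2))) = a ^ 2 := by
    show a ^ (((2 : ℕ) : ZMod (2 * 2))).val = a ^ 2
    rfl
  let f : QuaternionGroup 2 →* G :=
  { toFun := fun x => QuaternionGroup.casesOn x
      (fun i => A (.ofAdd i)) (fun i => b * A (.ofAdd i))
    map_one' := by
      show A (.ofAdd 0) = 1
      simp
    map_mul' := by
      rintro (i | i) (j | j)
      · show A (.ofAdd (i + j)) = A (.ofAdd i) * A (.ofAdd j)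
        rw [show Multiplicative.ofAdd (i + j) = .ofAdd i * .ofAdd j from rfl, map_mul]
      · show b * A (.ofAdd (j - i)) = A (.ofAdd i) * (b * A (.ofAdd j))
        rw [hsplit, ← mul_assoc, ← mul_assoc, ← key2]
      · show b * A (.ofAdd (i + j)) = b * A (.ofAdd i) * A (.ofAdd j)
        rw [show Multiplicative.ofAdd (i + j) = .ofAdd i * .ofAdd j from rfl, map_mul, mul_assoc]
      · show A (.ofAdd (((2 : ℕ) : ZMod (2 * 2)) + j - i))
            = b * A (.ofAdd i) * (b * A (.ofAdd j))
        have hrw : ((2 : ℕ) : ZMod (2 * 2)) + j - i = ((2 : ℕ) : ZMod (2 * 2)) + (j - i) := by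
          ring
        rw [hrw, show Multiplicative.ofAdd (((2 : ℕ) : ZMod (2 * 2)) + (j - i))
            = .ofAdd ((2 : ℕ) : ZMod (2 * 2)) * .ofAdd (j - i) from rfl, map_mul, hA2, hsplit]
        have : b * A (.ofAdd i) * (b * A (.ofAdd j))
            = b * b * ((A (.ofAdd i))⁻¹ * A (.ofAdd j)) := by
          rw [mul_assoc b (A (.ofAdd i)), ← mul_assoc (A (.ofAdd i)), key2]
          group
        rw [this, show b * b = a ^ 2 from by rw [← pow_two, hb2]] }
  have hfa : a ∈ f.range := ⟨.a 1, by
    show A (.ofAdd 1) = a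
    show a ^ (1 : ZMod (2 * 2)).val = a
    rw [show (1 : ZMod (2 * 2)).val = 1 from rfl, pow_one]⟩
  have hfb : b ∈ f.range := ⟨.xa 0, by
    show b * A (.ofAdd 0) = b
    simp⟩
  have hsurj : Function.Surjective f := by
    refine surj_helper f hfa hfb hb ?_ ?_
    · rw [ha4, Nat.card_eq_fintype_card, QuaternionGroup.card]
    · rw [ha4, Nat.card_eq_fintype_card, hG]
  have e := isoOfSurjCard f hsurj (by
    rw [Nat.card_eq_fintype_card, Nat.card_eq_fintype_card, QuaternionGroup.card, hG])
  exact ⟨e.symm⟩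

private lemma case_C8 {G : Type*} [Group G] [Fintype G] (hG : Fintype.card G = 8)
    (b : G) (hb8 : orderOf b = 8) : Nonempty (G ≃* Multiplicative (ZMod 8)) := by
  have b8 : b ^ 8 = 1 := by rw [← hb8]; exact pow_orderOf_eq_one b
  let f := powZModHom 8 b b8
  have hfb : b ∈ f.range := ⟨.ofAdd 1, by
    show b ^ (1 : ZMod 8).val = b
    rw [show (1 : ZMod 8).val = 1 from rfl, pow_one]⟩
  have htop : Subgroup.zpowers b = ⊤ :=
    Subgroup.eq_top_of_card_eq _ (by
      rw [Nat.card_zpowers, hb8, Nat.card_eq_fintype_card, hG])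
  have hsurj : Function.Surjective f := by
    rw [← MonoidHom.range_eq_top, eq_top_iff, ← htop]
    exact Subgroup.zpowers_le.2 hfb
  have e := isoOfSurjCard f hsurj (by
    simp [Nat.card_eq_fintype_card, hG])
  exact ⟨e.symm⟩

open DihedralGroup

private def ι2 : Multiplicative (ZMod 2) →* Multiplicative (ZMod 2) × DihedralGroup 4 where
  toFun x := (x, 1)
  map_one' := by decide
  map_mul' := by decide

private lemma ι2_inj : Function.Injective ι2 := by decide

private def ι4 : Multiplicative (ZMod 4) →* Multiplicative (ZMod 2) × DihedralGroup 4 where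
  toFun i := (1, r i.toAdd)
  map_one' := by decide
  map_mul' := by decide

private lemma ι4_inj : Function.Injective ι4 := by decide

private def ι42 : Multiplicative (ZMod 4) × Multiplicative (ZMod 2) →*
    Multiplicative (ZMod 2) × DihedralGroup 4 where
  toFun p := (p.2, r p.1.toAdd)
  map_one' := by decide
  map_mul' := by decide

private lemma ι42_inj : Function.Injective ι42 := by decide

private def ι22 : Multiplicative (ZMod 2) × Multiplicative (ZMod 2) →*
    Multiplicative (ZMod 2) × DihedralGroup 4 where
  toFun p := (p.1, (sr 0) ^ p.2.toAdd.val)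
  map_one' := by decide
  map_mul' := by decide

private lemma ι22_inj : Function.Injective ι22 := by decide

private def ι222 : (Multiplicative (ZMod 2) × Multiplicative (ZMod 2)) × Multiplicative (ZMod 2)
    →* Multiplicative (ZMod 2) × DihedralGroup 4 where
  toFun p := (p.1.1, (r 2) ^ p.1.2.toAdd.val * (sr 0) ^ p.2.toAdd.val)
  map_one' := by decide
  map_mul' := by decide

private lemma ι222_inj : Function.Injective ι222 := by decide

/-- order 4 element commuting with an order ≤ 2 element outside its span: `C4 × C2`. -/
private lemma case_C4C2 {G : Type*} [Group G] [Fintype G] (hG : Fintype.card G = 8)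
    (a c : G) (ha4 : orderOf a = 4) (hc : c ∉ Subgroup.zpowers a)
    (hc2 : c ^ 2 = 1) (hcomm : a * c = c * a) :
    ∃ f : G →* Multiplicative (ZMod 2) × DihedralGroup 4, Function.Injective f := by
  have a4 : a ^ 4 = 1 := by rw [← ha4]; exact pow_orderOf_eq_one a
  let f := (powZModHom 4 a a4).noncommCoprod (powZModHom 2 c hc2)
    (fun m n => Commute.pow_pow hcomm _ _)
  have hfa : a ∈ f.range := ⟨(.ofAdd 1, 1), by
    show a ^ (1 : ZMod 4).val * c ^ ((1 : Multiplicative (ZMod 2)).toAdd).val = a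
    rw [show (1 : ZMod 4).val = 1 from rfl, toAdd_one, ZMod.val_zero, pow_one, pow_zero, mul_one]⟩
  have hfc : c ∈ f.range := ⟨(1, .ofAdd 1), by
    show a ^ ((1 : Multiplicative (ZMod 4)).toAdd).val * c ^ (1 : ZMod 2).val = c
    rw [show (1 : ZMod 2).val = 1 from rfl, toAdd_one, ZMod.val_zero, pow_one, pow_zero, one_mul]⟩
  have hsurj : Function.Surjective f := by
    refine surj_helper f hfa hfc hc ?_ ?_
    · rw [ha4]; simp [Nat.card_eq_fintype_card]
    · rw [ha4, Nat.card_eq_fintype_card, hG]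
  have e := isoOfSurjCard f hsurj (by simp [Nat.card_eq_fintype_card, hG])
  exact ⟨ι42.comp e.symm.toMonoidHom, ι42_inj.comp e.symm.injective⟩

/-- cyclic of order 4. -/
private lemma case_C4 {G : Type*} [Group G] [Fintype G] (hG : Fintype.card G = 4)
    (a : G) (ha4 : orderOf a = 4) :
    ∃ f : G →* Multiplicative (ZMod 2) × DihedralGroup 4, Function.Injective f := by
  have a4 : a ^ 4 = 1 := by rw [← ha4]; exact pow_orderOf_eq_one a
  let f := powZModHom 4 a a4
  have hfa : a ∈ f.range := ⟨.ofAdd 1, by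
    show a ^ (1 : ZMod 4).val = a
    rw [show (1 : ZMod 4).val = 1 from rfl, pow_one]⟩
  have htop : Subgroup.zpowers a = ⊤ :=
    Subgroup.eq_top_of_card_eq _ (by rw [Nat.card_zpowers, ha4, Nat.card_eq_fintype_card, hG])
  have hsurj : Function.Surjective f := by
    rw [← MonoidHom.range_eq_top, eq_top_iff, ← htop]
    exact Subgroup.zpowers_le.2 hfa
  have e := isoOfSurjCard f hsurj (by simp [Nat.card_eq_fintype_card, hG])
  exact ⟨ι4.comp e.symm.toMonoidHom, ι4_inj.comp e.symm.injective⟩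

private lemma exists_not_mem {G : Type*} [Group G] [Fintype G] (S : Subgroup G)
    (h : Nat.card S ≠ Nat.card G) : ∃ x, x ∉ S := by
  by_contra hx
  push_neg at hx
  exact h (by rw [(Subgroup.eq_top_iff' S).2 hx, Subgroup.card_top])

private lemma orderOf_eq_two {G : Type*} [Group G] {a : G} (h : a ^ 2 = 1) (ha : a ≠ 1) :
    orderOf a = 2 :=
  have : Fact (Nat.Prime 2) := ⟨Nat.prime_two⟩
  orderOf_eq_prime h ha

/-- elementary abelian of order 2. -/
private lemma case_E2 {G : Type*} [Group G] [Fintype G] (hG : Fintype.card G = 2)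
    (a : G) (ha : a ≠ 1) (ha2 : a ^ 2 = 1) :
    ∃ f : G →* Multiplicative (ZMod 2) × DihedralGroup 4, Function.Injective f := by
  let f := powZModHom 2 a ha2
  have hfa : a ∈ f.range := ⟨.ofAdd 1, by
    show a ^ (1 : ZMod 2).val = a
    rw [show (1 : ZMod 2).val = 1 from rfl, pow_one]⟩
  have htop : Subgroup.zpowers a = ⊤ :=
    Subgroup.eq_top_of_card_eq _ (by
      rw [Nat.card_zpowers, orderOf_eq_two ha2 ha, Nat.card_eq_fintype_card, hG])
  have hsurj : Function.Surjective f := by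
    rw [← MonoidHom.range_eq_top, eq_top_iff, ← htop]
    exact Subgroup.zpowers_le.2 hfa
  have e := isoOfSurjCard f hsurj (by simp [Nat.card_eq_fintype_card, hG])
  exact ⟨ι2.comp e.symm.toMonoidHom, ι2_inj.comp e.symm.injective⟩

/-- elementary abelian of order 4. -/
private lemma case_E4 {G : Type*} [Group G] [Fintype G] (hG : Fintype.card G = 4)
    (hsq : ∀ x : G, x ^ 2 = 1) (hcm : ∀ x y : G, x * y = y * x)
    (a b : G) (ha : a ≠ 1) (hb : b ∉ Subgroup.zpowers a) :
    ∃ f : G →* Multiplicative (ZMod 2) × DihedralGroup 4, Function.Injective f := by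
  let f := (powZModHom 2 a (hsq a)).noncommCoprod (powZModHom 2 b (hsq b))
    (fun m n => Commute.pow_pow (hcm a b) _ _)
  have hfa : a ∈ f.range := ⟨(.ofAdd 1, 1), by
    show a ^ (1 : ZMod 2).val * b ^ ((1 : Multiplicative (ZMod 2)).toAdd).val = a
    rw [show (1 : ZMod 2).val = 1 from rfl, toAdd_one, ZMod.val_zero, pow_one, pow_zero, mul_one]⟩
  have hfb : b ∈ f.range := ⟨(1, .ofAdd 1), by
    show a ^ ((1 : Multiplicative (ZMod 2)).toAdd).val * b ^ (1 : ZMod 2).val = b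
    rw [show (1 : ZMod 2).val = 1 from rfl, toAdd_one, ZMod.val_zero, pow_one, pow_zero, one_mul]⟩
  have hsurj : Function.Surjective f := by
    refine surj_helper f hfa hfb hb ?_ ?_
    · rw [orderOf_eq_two (hsq a) ha]; simp [Nat.card_eq_fintype_card]
    · rw [orderOf_eq_two (hsq a) ha, Nat.card_eq_fintype_card, hG]
  have e := isoOfSurjCard f hsurj (by simp [Nat.card_eq_fintype_card, hG])
  exact ⟨ι22.comp e.symm.toMonoidHom, ι22_inj.comp e.symm.injective⟩

/-- elementary abelian of order 8. -/
private lemma case_E8 {G : Type*} [Group G] [Fintype G] (hG : Fintype.card G = 8)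
    (hsq : ∀ x : G, x ^ 2 = 1) (hcm : ∀ x y : G, x * y = y * x) :
    ∃ f : G →* Multiplicative (ZMod 2) × DihedralGroup 4, Function.Injective f := by
  obtain ⟨a, ha⟩ := Fintype.exists_ne_of_one_lt_card (by omega) (1 : G)
  have hcard_a : Nat.card (Subgroup.zpowers a) = 2 := by
    rw [Nat.card_zpowers, orderOf_eq_two (hsq a) ha]
  obtain ⟨b, hb⟩ := exists_not_mem (Subgroup.zpowers a) (by
    rw [hcard_a, Nat.card_eq_fintype_card, hG]; omega)
  let f₀ := (powZModHom 2 a (hsq a)).noncommCoprod (powZModHom 2 b (hsq b))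
    (fun m n => Commute.pow_pow (hcm a b) _ _)
  have hfa : a ∈ f₀.range := ⟨(.ofAdd 1, 1), by
    show a ^ (1 : ZMod 2).val * b ^ ((1 : Multiplicative (ZMod 2)).toAdd).val = a
    rw [show (1 : ZMod 2).val = 1 from rfl, toAdd_one, ZMod.val_zero, pow_one, pow_zero, mul_one]⟩
  have hfb : b ∈ f₀.range := ⟨(1, .ofAdd 1), by
    show a ^ ((1 : Multiplicative (ZMod 2)).toAdd).val * b ^ (1 : ZMod 2).val = b
    rw [show (1 : ZMod 2).val = 1 from rfl, toAdd_one, ZMod.val_zero, pow_one, pow_zero, one_mul]⟩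
  have hcard0 : Nat.card f₀.range = 4 := by
    have := card_between (Subgroup.zpowers_le.2 hfa) hfb hb (by
      rw [hcard_a]
      have h4 : Nat.card (Multiplicative (ZMod 2) × Multiplicative (ZMod 2)) = 4 := by
        simp [Nat.card_eq_fintype_card]
      have := card_range_dvd' f₀
      rw [h4] at this
      exact this)
    rw [this, hcard_a]
  obtain ⟨c, hc⟩ := exists_not_mem f₀.range (by rw [hcard0, Nat.card_eq_fintype_card, hG]; omega)
  let f := f₀.noncommCoprod (powZModHom 2 c (hsq c))
    (fun m n => by
      have h1 : Commute (a ^ ((m.1.toAdd).val)) (c ^ ((n.toAdd).val)) :=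
        Commute.pow_pow (hcm a c) _ _
      have h2 : Commute (b ^ ((m.2.toAdd).val)) (c ^ ((n.toAdd).val)) :=
        Commute.pow_pow (hcm b c) _ _
      exact h1.mul_left h2)
  have hle : f₀.range ≤ f.range := by
    rintro x ⟨m, hm⟩
    exact ⟨(m, 1), by
      show f₀ m * c ^ ((1 : Multiplicative (ZMod 2)).toAdd).val = x
      rw [toAdd_one, ZMod.val_zero, pow_zero, mul_one, hm]⟩
  have hfc : c ∈ f.range := ⟨(1, .ofAdd 1), by
    show f₀ 1 * c ^ (1 : ZMod 2).val = c
    rw [map_one, show (1 : ZMod 2).val = 1 from rfl, pow_one, one_mul]⟩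
  have hcardf : Nat.card f.range = 8 := by
    have := card_between hle hfc hc (by
      rw [hcard0]
      have h8 : Nat.card ((Multiplicative (ZMod 2) × Multiplicative (ZMod 2)) ×
          Multiplicative (ZMod 2)) = 8 := by
        simp [Nat.card_eq_fintype_card]
      have := card_range_dvd' f
      rw [h8] at this
      exact this)
    rw [this, hcard0]
  have hsurj : Function.Surjective f := by
    rw [← MonoidHom.range_eq_top]
    exact Subgroup.eq_top_of_card_eq _ (by rw [hcardf, Nat.card_eq_fintype_card, hG])
  have e := isoOfSurjCard f hsurj (by simp [Nat.card_eq_fintype_card, hG])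
  exact ⟨ι222.comp e.symm.toMonoidHom, ι222_inj.comp e.symm.injective⟩

/-- Every group of order dividing 8 that is not cyclic of order 8 and not the quaternion group
`Q₈` embeds into `C₂ × D₈` (a 2-Sylow subgroup of `S₆`). -/
theorem small_two_group_embeds_in_C2D8
    (G : Type*) [Group G] [Fintype G] (hcard : Fintype.card G ∣ 8)
    (hC8 : IsEmpty (G ≃* Multiplicative (ZMod 8)))
    (hQ8 : IsEmpty (G ≃* QuaternionGroup 2)) :
    ∃ f : G →* Multiplicative (ZMod 2) × DihedralGroup 4, Function.Injective f := by
  by_cases hsq : ∀ x : G, x ^ 2 = 1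
  · -- elementary abelian case
    have hinv : ∀ z : G, z⁻¹ = z := fun z =>
      inv_eq_of_mul_eq_one_right (by rw [← sq]; exact hsq z)
    have hcm : ∀ x y : G, x * y = y * x := by
      intro x y
      calc x * y = (x * y)⁻¹ := (hinv _).symm
      _ = y⁻¹ * x⁻¹ := mul_inv_rev _ _
      _ = y * x := by rw [hinv, hinv]
    have h1248 : Fintype.card G = 1 ∨ Fintype.card G = 2 ∨ Fintype.card G = 4 ∨
        Fintype.card G = 8 := by
      have h1 : 0 < Fintype.card G := Fintype.card_pos
      have h2 : Fintype.card G ≤ 8 := Nat.le_of_dvd (by norm_num) hcard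
      obtain ⟨n, hn⟩ : ∃ n, Fintype.card G = n := ⟨_, rfl⟩
      rw [hn] at h1 h2 hcard ⊢
      interval_cases n <;> omega
    rcases h1248 with h | h | h | h
    · have : Subsingleton G := Fintype.card_le_one_iff_subsingleton.mp (by omega)
      exact ⟨1, fun u v _ => Subsingleton.elim u v⟩
    · obtain ⟨a, ha⟩ := Fintype.exists_ne_of_one_lt_card (by omega) (1 : G)
      exact case_E2 h a ha (hsq a)
    · obtain ⟨a, ha⟩ := Fintype.exists_ne_of_one_lt_card (by omega) (1 : G)
      obtain ⟨b, hb⟩ := exists_not_mem (Subgroup.zpowers a) (by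
        rw [Nat.card_zpowers, orderOf_eq_two (hsq a) ha, Nat.card_eq_fintype_card, h]; omega)
      exact case_E4 h hsq hcm a b ha hb
    · exact case_E8 h hsq hcm
  · push_neg at hsq
    obtain ⟨x, hx⟩ := hsq
    have hdvd : orderOf x ∣ 8 := orderOf_dvd_card.trans hcard
    have hx2 : ¬orderOf x ∣ 2 := fun h => hx (orderOf_dvd_iff_pow_eq_one.1 h)
    have h48 : orderOf x = 4 ∨ orderOf x = 8 := by
      have h1 : 0 < orderOf x := orderOf_pos x
      have h2 : orderOf x ≤ 8 := Nat.le_of_dvd (by norm_num) hdvd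
      obtain ⟨n, hn⟩ : ∃ n, orderOf x = n := ⟨_, rfl⟩
      rw [hn] at h1 h2 hdvd hx2 ⊢
      interval_cases n <;> omega
    rcases h48 with h4 | h8
    swap
    · have hG : Fintype.card G = 8 :=
        Nat.dvd_antisymm hcard (h8 ▸ orderOf_dvd_card)
      obtain ⟨e⟩ := case_C8 hG x h8
      exact (hC8.false e).elim
    have hc48 : Fintype.card G = 4 ∨ Fintype.card G = 8 := by
      have h1 : (4 : ℕ) ∣ Fintype.card G := h4 ▸ orderOf_dvd_card
      have h2 : Fintype.card G ≤ 8 := Nat.le_of_dvd (by norm_num) hcard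
      have h3 : 0 < Fintype.card G := Fintype.card_pos
      obtain ⟨n, hn⟩ : ∃ n, Fintype.card G = n := ⟨_, rfl⟩
      rw [hn] at h1 h2 h3 hcard ⊢
      interval_cases n <;> omega
    rcases hc48 with hG | hG
    · exact case_C4 hG x h4
    -- card 8, x of order 4
    have hx2ne : x ^ 2 ≠ 1 := fun h => hx2 (orderOf_dvd_iff_pow_eq_one.2 h)
    have x4 : x ^ 4 = 1 := h4 ▸ pow_orderOf_eq_one x
    set H := Subgroup.zpowers x with hH
    have hxH : x ∈ H := Subgroup.mem_zpowers x
    have hcardH : Nat.card H = 4 := by rw [hH, Nat.card_zpowers, h4]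
    obtain ⟨b, hb⟩ := exists_not_mem H (by rw [hcardH, Nat.card_eq_fintype_card, hG]; omega)
    have hidx : H.index = 2 := by
      have := Subgroup.card_mul_index H
      rw [hcardH, Nat.card_eq_fintype_card, hG] at this
      omega
    have hb2 : b ^ 2 ∈ H := Subgroup.sq_mem_of_index_two hidx b
    have hconjH : b * x * b⁻¹ ∈ H := by
      rw [Subgroup.mul_mem_iff_of_index_two hidx,
        Subgroup.mul_mem_iff_of_index_two hidx, Subgroup.inv_mem_iff]
      tauto
    obtain ⟨m, hm4, hmeq⟩ := exists_pow_eq_of_mem_zpowers (by norm_num) x4 hconjH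
    obtain ⟨k, hk4, hkeq⟩ := exists_pow_eq_of_mem_zpowers (by norm_num) x4 hb2
    interval_cases m
    · -- b x b⁻¹ = 1, impossible
      exfalso
      rw [pow_zero, mul_inv_eq_one] at hmeq
      have hx1 : x = 1 := by rwa [mul_eq_left] at hmeq
      exact hx2ne (by rw [hx1, one_pow])
    · -- commutative case
      rw [pow_one] at hmeq
      have hcm : b * x = x * b := by
        calc b * x = (b * x * b⁻¹) * b := by group
        _ = x * b := by rw [hmeq]
      have horder8 : b ^ 4 = x ^ 2 → False := by
        intro hb4
        have hd : orderOf b ∣ 8 := orderOf_dvd_card.trans hcard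
        have hnd : ¬orderOf b ∣ 4 := fun h =>
          hx2ne (hb4 ▸ orderOf_dvd_iff_pow_eq_one.1 h)
        have hb8 : orderOf b = 8 := by
          have h1 : 0 < orderOf b := orderOf_pos b
          have h2 : orderOf b ≤ 8 := Nat.le_of_dvd (by norm_num) hd
          obtain ⟨n, hn⟩ : ∃ n, orderOf b = n := ⟨_, rfl⟩
          rw [hn] at h1 h2 hd hnd ⊢
          interval_cases n <;> omega
        obtain ⟨e⟩ := case_C8 hG b hb8
        exact (hC8.false e).elim
      interval_cases k
      · rw [pow_zero] at hkeq
        exact case_C4C2 hG x b h4 hb hkeq hcm.symm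
      · exact (horder8 (by
          rw [pow_one] at hkeq
          rw [show (4 : ℕ) = 2 * 2 from rfl, pow_mul, hkeq])).elim
      · -- b^2 = x^2 : use c = x * b
        have hcb : Commute x b := hcm.symm
        have hc2 : (x * b) ^ 2 = 1 := by
          rw [hcb.mul_pow, hkeq, ← pow_add]
          exact x4
        have hcH : x * b ∉ H := fun h => hb (by
          have := mul_mem (Subgroup.inv_mem _ hxH) h
          rwa [← mul_assoc, inv_mul_cancel, one_mul] at this)
        exact case_C4C2 hG x (x * b) h4 hcH hc2 (by simp only [mul_assoc]; rw [hcm])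
      · exact (horder8 (by
          rw [show (4 : ℕ) = 2 * 2 from rfl, pow_mul, hkeq, ← pow_mul,
            show 3 * 2 = 4 + 2 from rfl, pow_add, x4, one_mul])).elim
    · -- b x b⁻¹ = x², impossible
      exfalso
      have h2 := congrArg (fun z => z ^ 2) hmeq
      simp only [conj_pow] at h2
      rw [← pow_mul, show 2 * 2 = 4 from rfl, x4] at h2
      rw [mul_inv_eq_one] at h2
      exact hx2ne (mul_left_cancel (h2.trans (mul_one b).symm))
    · -- b x b⁻¹ = x³ = x⁻¹
      have hx3 : x ^ 3 = x⁻¹ :=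
        eq_inv_of_mul_eq_one_left (by rw [← pow_succ]; exact x4)
      have hconj' : b * x * b⁻¹ = x⁻¹ := by rw [hmeq, hx3]
      interval_cases k
      · rw [pow_zero] at hkeq
        exact case_D8 hG x b h4 hb hconj' hkeq
      · exfalso
        rw [pow_one] at hkeq
        have hfix : b * x * b⁻¹ = x := by rw [← hkeq]; group
        rw [hconj'] at hfix
        have h' : x * x = x⁻¹ * x := by rw [hfix]
        exact hx2ne (by rw [sq, h', inv_mul_cancel])
      · obtain ⟨e⟩ := case_Q8 hG x b h4 hb hconj' hkeq
        exact (hQ8.false e).elim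
      · exfalso
        rw [hx3] at hkeq
        have hfix : b * x⁻¹ * b⁻¹ = x⁻¹ := by rw [← hkeq]; group
        have hfix2 : b * x * b⁻¹ = x := by
          have := congrArg (fun z => z⁻¹) hfix
          simpa [mul_assoc] using this
        rw [hconj'] at hfix2
        have h' : x * x = x⁻¹ * x := by rw [hfix2]
        exact hx2ne (by rw [sq, h', inv_mul_cancel])
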